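/- Let G be a profinite group, E a finite extension of ℚ_p with ring of integers 𝒪_E and residue field k_E, and ρ : G → GL_n(𝒪_E) a continuous representation with residual representation ρ̄ : G → GL_n(k_E). If there exists g₀ ∈ G such that ρ̄(g₀) has eigenvalue 1 with algebraic multiplicity one, then there exists g ∈ G such that ρ(g) has eigenvalue 1 with algebraic multiplicity one. -/

import Mathlib

open Matrix Polynomial IsLocalRing

section PolyAux
variable {K : Type*} [Field K] {p : ℕ} [Fact p.Prime] [CharP K p]

theorem rootMult_pow_aux {R : Type*} [CommRing R] [IsDomain R] {f : R[X]} (hf : f ≠ 0) (x : R) (m : ℕ) :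
    rootMultiplicity x (f ^ m) = m * rootMultiplicity x f := by
  induction m with
  | zero => simp [rootMultiplicity_eq_zero, IsRoot]
  | succ m ih =>
    rw [pow_succ, rootMultiplicity_mul (mul_ne_zero (pow_ne_zero _ hf) hf), ih]
    ring

theorem rootMult_comp_pow (f : K[X]) (hf : f ≠ 0) (k : ℕ) :
    rootMultiplicity 1 (f.comp (X ^ p ^ k)) = p ^ k * rootMultiplicity 1 f := by
  haveI : CharP K[X] p := charP_of_injective_ringHom (Polynomial.C_injective) p
  set r := rootMultiplicity 1 f with hr
  obtain ⟨g, hfg, hg⟩ := f.exists_eq_pow_rootMultiplicity_mul_and_not_dvd hf 1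
  rw [← hr] at hfg
  have hg1 : g.eval 1 ≠ 0 := fun h => hg (dvd_iff_isRoot.mpr h)
  have hX : (X - C 1 : K[X]).comp (X ^ p ^ k) = (X - C 1) ^ p ^ k := by
    rw [sub_comp, X_comp, C_comp, sub_pow_char_pow_of_commute p k (Commute.all _ _)]
    simp
  have hcomp : f.comp (X ^ p ^ k) = (X - C 1) ^ (p ^ k * r) * g.comp (X ^ p ^ k) := by
    rw [hfg, mul_comp, pow_comp, hX, ← pow_mul]
  have hgc : (g.comp (X ^ p ^ k)).eval 1 ≠ 0 := by
    rw [eval_comp]; simpa using hg1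
  rw [hcomp, rootMultiplicity_mul (mul_ne_zero (pow_ne_zero _ (X_sub_C_ne_zero 1))
      (fun h => hgc (by rw [h]; simp))), rootMultiplicity_X_sub_C_pow,
    rootMultiplicity_eq_zero (fun h => hgc h), add_zero]

variable {n : Type*} [Fintype n] [DecidableEq n]

theorem eval_charpoly' {R : Type*} [CommRing R] (M : Matrix n n R) (r : R) :
    (charpoly M).eval r = (Matrix.scalar n r - M).det := by
  rw [charpoly, show (Polynomial.eval r : R[X] → R) = ⇑(Polynomial.evalRingHom r) from rfl,
    RingHom.map_det]
  congr 1
  ext i j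
  by_cases h : i = j
  · subst h
    simp [charmatrix_apply_eq]
  · simp [charmatrix_apply_ne _ _ _ h, Matrix.scalar_apply, Matrix.diagonal_apply_ne _ h]

theorem charpoly_pow_comp [Nonempty n] (W : Matrix n n K) (k : ℕ) :
    (charpoly (W ^ p ^ k)).comp (X ^ p ^ k) = (charpoly W) ^ p ^ k := by
  haveI : CharP K[X] p := charP_of_injective_ringHom (Polynomial.C_injective) p
  haveI : CharP (Matrix n n K[X]) p := Matrix.charP p
  have h1 : (charmatrix W) ^ (p ^ k)
      = Matrix.scalar n ((X : K[X]) ^ p ^ k) - (C : K →+* K[X]).mapMatrix (W ^ p ^ k) := by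
    rw [charmatrix, sub_pow_char_pow_of_commute p k
      (Matrix.scalar_commute _ (fun r' => Commute.all _ _) _), ← map_pow, ← map_pow]
  have h2 : (charmatrix (W ^ p ^ k)).map (Polynomial.eval₂RingHom (C : K →+* K[X]) (X ^ p ^ k))
      = Matrix.scalar n ((X : K[X]) ^ p ^ k) - (C : K →+* K[X]).mapMatrix (W ^ p ^ k) := by
    ext i j
    by_cases h : i = j
    · subst h
      simp [charmatrix_apply_eq, Matrix.scalar_apply]
    · simp [charmatrix_apply_ne _ _ _ h, Matrix.scalar_apply, Matrix.diagonal_apply_ne _ h]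
  calc (charpoly (W ^ p ^ k)).comp (X ^ p ^ k)
      = Polynomial.eval₂RingHom (C : K →+* K[X]) (X ^ p ^ k) (charpoly (W ^ p ^ k)) := rfl
    _ = ((charmatrix (W ^ p ^ k)).map (Polynomial.eval₂RingHom (C : K →+* K[X]) (X ^ p ^ k))).det := by
        rw [charpoly, RingHom.map_det]; rfl
    _ = ((charmatrix W) ^ (p ^ k)).det := by rw [h2, ← h1]
    _ = (charpoly W) ^ p ^ k := by rw [Matrix.det_pow, charpoly]

theorem rootMult_charpoly_pow [Nonempty n] (W : Matrix n n K) (k : ℕ) :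
    rootMultiplicity 1 (charpoly (W ^ p ^ k)) = rootMultiplicity 1 (charpoly W) := by
  have h2 := rootMult_comp_pow (p := p) (charpoly (W ^ p ^ k)) (charpoly_monic _).ne_zero k
  rw [charpoly_pow_comp W k, rootMult_pow_aux (charpoly_monic W).ne_zero] at h2
  exact Nat.eq_of_mul_eq_mul_left (pow_pos (Fact.out (p := p.Prime)).pos k) h2.symm

end PolyAux

section RingAux
variable {p : ℕ} [Fact p.Prime] {𝒪 : Type*} [CommRing 𝒪]

theorem pow_p_sub_one_mem {I : Ideal 𝒪} (hp : (p : 𝒪) ∈ I)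
    {x : 𝒪} (hx : x - 1 ∈ I) : ∀ k : ℕ, x ^ p ^ k - 1 ∈ I ^ (k + 1) := by
  have hp2 : 2 ≤ p := (Fact.out (p := p.Prime)).two_le
  have step : ∀ (j : ℕ), 1 ≤ j → ∀ y : 𝒪, y - 1 ∈ I ^ j → y ^ p - 1 ∈ I ^ (j + 1) := by
    intro j hj y hy
    have hmI : y - 1 ∈ I := by simpa using Ideal.pow_le_pow_right hj hy
    have hpow : ∀ l : ℕ, 1 ≤ l → (y - 1) ^ l ∈ I ^ j := by
      intro l hl
      rw [show l = (l - 1) + 1 by omega, pow_succ]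
      exact Ideal.mul_mem_left _ _ hy
    have hexp : y ^ p - 1 = ∑ i ∈ Finset.range p, (y - 1) ^ (i + 1) * (p.choose (i + 1) : 𝒪) := by
      conv_lhs => rw [show y = (y - 1) + 1 by ring]
      rw [add_pow, Finset.sum_range_succ']
      simp
    rw [hexp]
    apply Ideal.sum_mem
    intro i _hi
    by_cases hip : i + 1 = p
    · have h1 : (p.choose (i + 1) : 𝒪) = 1 := by rw [hip, Nat.choose_self, Nat.cast_one]
      rw [h1, mul_one, pow_succ, pow_succ]
      exact Ideal.mul_mem_mul (hpow i (by omega)) hmI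
    · have hlt : i + 1 < p := lt_of_le_of_ne (Nat.succ_le_of_lt (Finset.mem_range.mp _hi)) hip
      obtain ⟨c, hc⟩ := (Fact.out (p := p.Prime)).dvd_choose_self (Nat.succ_ne_zero i) hlt
      have heq : (y - 1) ^ (i + 1) * (p.choose (i + 1) : 𝒪) = ((y - 1) ^ (i + 1) * c) * p := by
        rw [hc]; push_cast; ring
      rw [heq, pow_succ]
      exact Ideal.mul_mem_mul (Ideal.mul_mem_right _ _ (hpow (i + 1) (by omega))) hp
  intro k
  induction k with
  | zero => simpa using hx
  | succ k ih =>
    have := step (k + 1) (by omega) (x ^ p ^ k) ih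
    rwa [← pow_mul, ← pow_succ] at this
end RingAux

section FinAux
variable (p : ℕ) [Fact p.Prime] (𝒪 : Type*) [CommRing 𝒪]
  [Algebra ℤ_[p] 𝒪] [Module.Finite ℤ_[p] 𝒪]

theorem finite_quot (I : Ideal 𝒪) (hpI : (p : 𝒪) ∈ I) : Finite (𝒪 ⧸ I) := by
  haveI : Module.Finite ℤ_[p] (𝒪 ⧸ I) :=
    Module.Finite.of_surjective (Ideal.Quotient.mkₐ ℤ_[p] I).toLinearMap
      (Ideal.Quotient.mk_surjective)
  obtain ⟨m, v, hv⟩ := Module.Finite.exists_fin (R := ℤ_[p]) (M := 𝒪 ⧸ I)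
  have hp0 : ((p : ℤ_[p])) • (1 : 𝒪 ⧸ I) = 0 := by
    rw [Algebra.smul_def, mul_one]
    have : (algebraMap ℤ_[p] (𝒪 ⧸ I)) (p : ℤ_[p]) = ((p : 𝒪 ⧸ I)) := by
      rw [show ((p : ℤ_[p])) = ((p : ℕ) : ℤ_[p]) by norm_cast, map_natCast]
    rw [this, show ((p : 𝒪 ⧸ I)) = Ideal.Quotient.mk I ((p : 𝒪)) by norm_cast,
      Ideal.Quotient.eq_zero_iff_mem]
    exact hpI
  have key : ∀ (c : ℤ_[p]) (x : 𝒪 ⧸ I), c • x = (PadicInt.toZMod c).val • x := by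
    intro c x
    have hsub : c - ((PadicInt.toZMod c).val : ℤ_[p]) ∈ Ideal.span {(p : ℤ_[p])} := by
      rw [← PadicInt.maximalIdeal_eq_span_p]
      have := PadicInt.toZMod_spec c
      rwa [show ((PadicInt.toZMod c).cast : ℤ_[p]) = (((PadicInt.toZMod c).val : ℕ) : ℤ_[p]) by
        rw [ZMod.natCast_val]] at this
    obtain ⟨d, hd⟩ := Ideal.mem_span_singleton'.mp hsub
    have hpx : ((p : ℤ_[p])) • x = 0 := by
      rw [show x = (1 : 𝒪 ⧸ I) * x from (one_mul x).symm, ← smul_mul_assoc, hp0, zero_mul]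
    set w := (PadicInt.toZMod c).val with hw
    have hc' : c = d * (p : ℤ_[p]) + (w : ℤ_[p]) := sub_eq_iff_eq_add.mp hd.symm
    calc c • x = (d * (p : ℤ_[p]) + (w : ℤ_[p])) • x := by rw [← hc']
      _ = w • x := by
        rw [add_smul, mul_smul, hpx, smul_zero, zero_add, Nat.cast_smul_eq_nsmul]
  have hsurj : Function.Surjective (fun c : Fin m → ZMod p => ∑ i, (c i).val • v i) := by
    intro x
    have hx : x ∈ Submodule.span ℤ_[p] (Set.range v) := hv ▸ Submodule.mem_top
    obtain ⟨c, hc⟩ := (Submodule.mem_span_range_iff_exists_fun ℤ_[p]).mp hx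
    refine ⟨fun i => PadicInt.toZMod (c i), ?_⟩
    simp only
    rw [← hc]
    exact Finset.sum_congr rfl (fun i _ => (key (c i) (v i)).symm)
  exact Finite.of_surjective _ hsurj

theorem p_mem_max [Nontrivial 𝒪] [IsLocalRing 𝒪] : (p : 𝒪) ∈ maximalIdeal 𝒪 := by
  rw [mem_maximalIdeal, mem_nonunits_iff]
  intro hu
  obtain ⟨x, hx⟩ := hu.exists_right_inv
  have hint : IsIntegral ℤ_[p] x := IsIntegral.of_finite ℤ_[p] x
  obtain ⟨f, hfm, hfx⟩ := hint
  set d := f.natDegree with hd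
  have hd0 : d ≠ 0 := by
    intro h0
    have : f = 1 := hfm.natDegree_eq_zero.mp h0
    rw [this] at hfx
    simp [Polynomial.eval₂_one] at hfx
  -- expand
  set φ := algebraMap ℤ_[p] 𝒪 with hφ
  have hsum : f.eval₂ φ x = ∑ i ∈ Finset.range (d + 1), φ (f.coeff i) * x ^ i :=
    Polynomial.eval₂_eq_sum_range _ _
  have hps : (p : 𝒪) ^ d * f.eval₂ φ x = φ (∑ i ∈ Finset.range (d + 1), f.coeff i * (p : ℤ_[p]) ^ (d - i)) := by
    rw [hsum, Finset.mul_sum, map_sum]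
    apply Finset.sum_congr rfl
    intro i hi
    have hle : i ≤ d := Nat.lt_succ_iff.mp (Finset.mem_range.mp hi)
    have : (p : 𝒪) ^ d = (p : 𝒪) ^ (d - i) * (p : 𝒪) ^ i := by
      rw [← pow_add]; congr 1; omega
    rw [this, _root_.map_mul, map_pow]
    have hφp : φ ((p : ℤ_[p])) = (p : 𝒪) := by
      rw [show ((p : ℤ_[p])) = ((p : ℕ) : ℤ_[p]) by norm_cast, map_natCast]
    rw [hφp]
    have hxp : (p : 𝒪) ^ i * x ^ i = 1 := by
      rw [← mul_pow, hx, one_pow]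
    calc (p : 𝒪) ^ (d - i) * (p : 𝒪) ^ i * (φ (f.coeff i) * x ^ i)
        = φ (f.coeff i) * (p : 𝒪) ^ (d - i) * ((p : 𝒪) ^ i * x ^ i) := by ring
      _ = φ (f.coeff i) * (p : 𝒪) ^ (d - i) := by rw [hxp, mul_one]
  set z := ∑ i ∈ Finset.range (d + 1), f.coeff i * (p : ℤ_[p]) ^ (d - i) with hz
  have hz0 : φ z = 0 := by rw [← hps, hfx, mul_zero]
  have hzu : IsUnit z := by
    have hz1 : z - 1 ∈ maximalIdeal ℤ_[p] := by
      rw [PadicInt.maximalIdeal_eq_span_p, hz, Finset.sum_range_succ]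
      have hcd : f.coeff d = 1 := hfm.coeff_natDegree
      rw [hcd, Nat.sub_self, pow_zero, one_mul, add_sub_cancel_right]
      apply Ideal.sum_mem
      intro i hi
      have : d - i ≠ 0 := by
        have := Finset.mem_range.mp hi; omega
      apply Ideal.mem_span_singleton'.mpr
      refine ⟨f.coeff i * (p : ℤ_[p]) ^ (d - i - 1), ?_⟩
      conv_rhs => rw [show d - i = (d - i - 1) + 1 by omega]
      rw [pow_succ]; ring
    by_contra hnu
    have hzm : z ∈ maximalIdeal ℤ_[p] := by rwa [mem_maximalIdeal, mem_nonunits_iff]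
    have h1 : (1 : ℤ_[p]) ∈ maximalIdeal ℤ_[p] := by
      have := Ideal.sub_mem _ hzm hz1
      simpa using this
    exact (IsLocalRing.maximalIdeal.isMaximal ℤ_[p]).ne_top (Ideal.eq_top_of_isUnit_mem _ h1 isUnit_one)
  have : IsUnit (φ z) := hzu.map φ
  rw [hz0] at this
  exact zero_ne_one (isUnit_zero_iff.mp this)
end FinAux

section CompleteAux
variable (p : ℕ) [Fact p.Prime] (𝒪 : Type*) [CommRing 𝒪] [IsDomain 𝒪] [IsLocalRing 𝒪]
  [Algebra ℤ_[p] 𝒪] [Module.Finite ℤ_[p] 𝒪] [Module.Free ℤ_[p] 𝒪]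

include p in
theorem noetherian_O : IsNoetherianRing 𝒪 := Algebra.FiniteType.isNoetherianRing ℤ_[p] 𝒪

theorem max_pow_le_span_p : ∃ h : ℕ, 1 ≤ h ∧
    maximalIdeal 𝒪 ^ h ≤ Ideal.span {(p : 𝒪)} := by
  set I := Ideal.span {(p : 𝒪)} with hI
  have hIle : I ≤ maximalIdeal 𝒪 := by
    rw [hI, Ideal.span_le, Set.singleton_subset_iff]
    exact p_mem_max p 𝒪
  have hInetop : I ≠ ⊤ := fun h =>
    (IsLocalRing.maximalIdeal.isMaximal 𝒪).ne_top (top_le_iff.mp (h ▸ hIle))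
  haveI : Nontrivial (𝒪 ⧸ I) := Ideal.Quotient.nontrivial_iff.mpr hInetop
  haveI : IsLocalRing (𝒪 ⧸ I) :=
    IsLocalRing.of_surjective' (Ideal.Quotient.mk I) Ideal.Quotient.mk_surjective
  haveI : Finite (𝒪 ⧸ I) := finite_quot p 𝒪 I (Ideal.subset_span rfl)
  haveI : IsArtinianRing (𝒪 ⧸ I) := isArtinian_of_finite
  obtain ⟨h, hh⟩ := IsArtinianRing.isNilpotent_jacobson_bot (R := 𝒪 ⧸ I)
  rw [IsLocalRing.jacobson_eq_maximalIdeal (⊥ : Ideal (𝒪 ⧸ I)) bot_ne_top] at hh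
  refine ⟨h + 1, by omega, ?_⟩
  have hmap : Ideal.map (Ideal.Quotient.mk I) (maximalIdeal 𝒪) ≤ maximalIdeal (𝒪 ⧸ I) := by
    rw [Ideal.map_le_iff_le_comap]
    intro x hxm
    haveI : IsLocalHom (Ideal.Quotient.mk I) :=
      isLocalHom_of_le_jacobson_bot I
        (by rw [IsLocalRing.jacobson_eq_maximalIdeal (⊥ : Ideal 𝒪) bot_ne_top]; exact hIle)
    rw [Ideal.mem_comap, mem_maximalIdeal, mem_nonunits_iff]
    intro hunit
    exact (mem_maximalIdeal x).mp hxm (IsLocalHom.map_nonunit x hunit)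
  intro x hx
  have h1 : Ideal.Quotient.mk I x ∈ (Ideal.map (Ideal.Quotient.mk I) (maximalIdeal 𝒪)) ^ (h + 1) := by
    rw [← Ideal.map_pow]
    exact Ideal.mem_map_of_mem _ hx
  have h2 : (Ideal.map (Ideal.Quotient.mk I) (maximalIdeal 𝒪)) ^ (h + 1) ≤ ⊥ := by
    calc (Ideal.map (Ideal.Quotient.mk I) (maximalIdeal 𝒪)) ^ (h + 1)
        ≤ (maximalIdeal (𝒪 ⧸ I)) ^ (h + 1) := Ideal.pow_right_mono hmap _
      _ ≤ (maximalIdeal (𝒪 ⧸ I)) ^ h := Ideal.pow_le_pow_right (by omega)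
      _ = ⊥ := by simp [hh]
  have := h2 h1
  rwa [Ideal.mem_bot, Ideal.Quotient.eq_zero_iff_mem] at this

include p in
theorem adic_complete : IsAdicComplete (maximalIdeal 𝒪) 𝒪 := by
  obtain ⟨h, hh1, hh⟩ := max_pow_le_span_p p 𝒪
  haveI : IsNoetherianRing 𝒪 := noetherian_O p 𝒪
  refine { toIsHausdorff := ⟨?_⟩, toIsPrecomplete := ⟨?_⟩ }
  · -- Hausdorff
    intro x hx
    have hbot : (⨅ i : ℕ, (maximalIdeal 𝒪) ^ i) = ⊥ :=
      Ideal.iInf_pow_eq_bot_of_isLocalRing _ (IsLocalRing.maximalIdeal.isMaximal 𝒪).ne_top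
    have : x ∈ (⨅ i : ℕ, (maximalIdeal 𝒪) ^ i) := by
      rw [Submodule.mem_iInf]
      intro i
      have := hx i
      rwa [SModEq.zero, smul_eq_mul, Ideal.mul_top] at this
    rw [hbot] at this
    exact this
  · -- Precomplete
    intro f hf
    -- coordinates
    let ι := Module.Free.ChooseBasisIndex ℤ_[p] 𝒪
    let b : Module.Basis ι ℤ_[p] 𝒪 := Module.Free.chooseBasis ℤ_[p] 𝒪
    -- the subsequence f (h * m) is cauchy for p-adic
    have hg : ∀ {m m' : ℕ}, m ≤ m' → f (h * m) - f (h * m') ∈ Ideal.span {(p : 𝒪) ^ m} := by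
      intro m m' hmm
      have h1 := hf (Nat.mul_le_mul_left h hmm)
      rw [SModEq.sub_mem, smul_eq_mul, Ideal.mul_top] at h1
      have h2 : (maximalIdeal 𝒪) ^ (h * m) ≤ Ideal.span {(p : 𝒪)} ^ m := by
        rw [pow_mul]
        exact Ideal.pow_right_mono hh m
      rw [← Ideal.span_singleton_pow]
      exact h2 h1
    have hcoord : ∀ (i : ι) {m m' : ℕ}, m ≤ m' →
        b.repr (f (h * m)) i - b.repr (f (h * m')) i ∈ (maximalIdeal ℤ_[p]) ^ m := by
      intro i m m' hmm
      obtain ⟨y, hy⟩ := Ideal.mem_span_singleton'.mp (hg hmm)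
      rw [PadicInt.maximalIdeal_eq_span_p, Ideal.span_singleton_pow,
        Ideal.mem_span_singleton']
      refine ⟨b.repr y i, ?_⟩
      have : b.repr (f (h * m)) i - b.repr (f (h * m')) i
          = b.repr (f (h * m) - f (h * m')) i := by rw [map_sub]; rfl
      rw [this, ← hy]
      have : y * (p : 𝒪) ^ m = ((p : ℤ_[p]) ^ m) • y := by
        rw [Algebra.smul_def, map_pow]
        rw [show (algebraMap ℤ_[p] 𝒪) (p : ℤ_[p]) = (p : 𝒪) by
          rw [show ((p : ℤ_[p])) = ((p : ℕ) : ℤ_[p]) by norm_cast, map_natCast]]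
        ring
      rw [this, _root_.map_smul, Finsupp.smul_apply, smul_eq_mul, mul_comm]
    -- limits of coordinates
    have hprec : ∀ i : ι, ∃ L : ℤ_[p], ∀ m : ℕ,
        b.repr (f (h * m)) i ≡ L [SMOD ((maximalIdeal ℤ_[p]) ^ m • ⊤ : Submodule ℤ_[p] ℤ_[p])] := by
      intro i
      apply IsPrecomplete.prec (inferInstance : IsPrecomplete (maximalIdeal ℤ_[p]) ℤ_[p])
      intro m m' hmm
      rw [SModEq.sub_mem, smul_eq_mul, Ideal.mul_top]
      exact hcoord i hmm
    choose L hL using hprec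
    refine ⟨∑ i, L i • b i, ?_⟩
    intro m
    rw [SModEq.sub_mem, smul_eq_mul, Ideal.mul_top]
    -- f m - Σ L i b i = (f m - f (h*m)) + (f (h*m) - Σ L i b i)
    have hm1 : f m - f (h * m) ∈ (maximalIdeal 𝒪) ^ m := by
      have := hf (Nat.le_mul_of_pos_left m (show 0 < h by omega))
      rwa [SModEq.sub_mem, smul_eq_mul, Ideal.mul_top] at this
    have hm2 : f (h * m) - (∑ i, L i • b i) ∈ (maximalIdeal 𝒪) ^ m := by
      have hexp : f (h * m) - (∑ i, L i • b i) = ∑ i, (b.repr (f (h * m)) i - L i) • b i := by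
        conv_lhs => rw [← Module.Basis.sum_repr b (f (h * m))]
        rw [← Finset.sum_sub_distrib]
        exact Finset.sum_congr rfl (fun i _ => by rw [sub_smul])
      rw [hexp]
      apply Ideal.sum_mem
      intro i _
      have := hL i m
      rw [SModEq.sub_mem, smul_eq_mul, Ideal.mul_top, PadicInt.maximalIdeal_eq_span_p,
        Ideal.span_singleton_pow, Ideal.mem_span_singleton'] at this
      obtain ⟨c, hc⟩ := this
      rw [show b.repr (f (h * m)) i - L i = c * (p : ℤ_[p]) ^ m from hc.symm]
      have : (c * (p : ℤ_[p]) ^ m) • b i = (c • b i) * (p : 𝒪) ^ m := by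
        rw [mul_smul, Algebra.smul_def (((p : ℤ_[p]) ^ m)), map_pow]
        rw [show (algebraMap ℤ_[p] 𝒪) (p : ℤ_[p]) = (p : 𝒪) by
          rw [show ((p : ℤ_[p])) = ((p : ℕ) : ℤ_[p]) by norm_cast, map_natCast]]
        rw [← mul_smul_comm]
        ring
      rw [this]
      exact Ideal.mul_mem_left _ _ (Ideal.pow_mem_pow (p_mem_max p 𝒪) m)
    have := Ideal.add_mem _ hm1 hm2
    simpa using this

end CompleteAux


section RootAux
variable {𝒪 : Type*} [CommRing 𝒪]

theorem isRoot_charpoly_pow {n : Type*} [Fintype n] [DecidableEq n]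
    (W : Matrix n n 𝒪) {α : 𝒪} (h : (charpoly W).IsRoot α) (q : ℕ) :
    (charpoly (W ^ q)).IsRoot (α ^ q) := by
  have hev : (charpoly W).eval α = 0 := h
  rw [eval_charpoly'] at hev
  have key := Commute.geom_sum₂_mul
    (x := Matrix.scalar n α) (y := W) (Matrix.scalar_commute _ (fun r' => Commute.all _ _) _) q
  have hz : (Matrix.scalar n (α ^ q) - W ^ q).det = 0 := by
    rw [show Matrix.scalar n (α ^ q) = (Matrix.scalar n α) ^ q from map_pow _ _ _,
      ← key, Matrix.det_mul, hev, mul_zero]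
  rw [IsRoot, eval_charpoly', hz]

theorem root_unique [IsLocalRing 𝒪] [IsDomain 𝒪] {f : 𝒪[X]} (hf : f.Monic)
    (hres : rootMultiplicity 1 (f.map (residue 𝒪)) = 1)
    {a b : 𝒪} (ha : f.IsRoot a) (hb : f.IsRoot b)
    (ha1 : residue 𝒪 a = 1) (hb1 : residue 𝒪 b = 1) : a = b := by
  obtain ⟨g, hg⟩ := (dvd_iff_isRoot.mpr ha)
  have hfm : f.map (residue 𝒪) = (X - C 1) * g.map (residue 𝒪) := by
    rw [hg, Polynomial.map_mul, Polynomial.map_sub, map_X, map_C, ha1]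
  have hfm0 : f.map (residue 𝒪) ≠ 0 := (hf.map _).ne_zero
  have hgm0 : g.map (residue 𝒪) ≠ 0 := right_ne_zero_of_mul (hfm ▸ hfm0)
  rw [hfm, rootMultiplicity_mul (hfm ▸ hfm0), rootMultiplicity_X_sub_C_self] at hres
  have h0 : rootMultiplicity 1 (g.map (residue 𝒪)) = 0 := by omega
  have hnr : ¬ (g.map (residue 𝒪)).IsRoot 1 := by
    intro h
    have := (rootMultiplicity_pos hgm0).mpr h
    omega
  have hb' : f.eval b = 0 := hb
  rw [hg, eval_mul, eval_sub, eval_X, eval_C] at hb'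
  rcases mul_eq_zero.mp hb' with h | h
  · exact (sub_eq_zero.mp h).symm
  · exfalso
    apply hnr
    have heq : (g.map (residue 𝒪)).eval (residue 𝒪 b) = residue 𝒪 (g.eval b) := by
      rw [Polynomial.eval_map, eval₂_at_apply]
    rw [IsRoot, ← hb1, heq, h, map_zero]
end RootAux

/-- Hensel lifting for simple residual root 1 of charpoly. -/
theorem hensel_root_one {𝒪 : Type*} [CommRing 𝒪] [IsLocalRing 𝒪]
    [HenselianRing 𝒪 (maximalIdeal 𝒪)]
    {n : Type*} [Fintype n] [DecidableEq n] (W : Matrix n n 𝒪)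
    (hres : rootMultiplicity 1 ((charpoly W).map (residue 𝒪)) = 1) :
    ∃ α : 𝒪, (charpoly W).IsRoot α ∧ residue 𝒪 α = 1 := by
  set f := charpoly W with hf
  have hmono : f.Monic := charpoly_monic W
  have hmapne : f.map (residue 𝒪) ≠ 0 := (hmono.map _).ne_zero
  have hroot1 : (f.map (residue 𝒪)).IsRoot 1 :=
    (rootMultiplicity_pos hmapne).mp (by omega)
  have heval : residue 𝒪 (f.eval 1) = (f.map (residue 𝒪)).eval 1 := by
    rw [Polynomial.eval_map, show (1 : ResidueField 𝒪) = residue 𝒪 1 by rw [_root_.map_one],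
      eval₂_at_apply]
  have h₁ : f.eval 1 ∈ maximalIdeal 𝒪 := by
    rw [← Ideal.Quotient.eq_zero_iff_mem]
    have : residue 𝒪 (f.eval 1) = 0 := by rw [heval]; exact hroot1
    exact this
  have h₂ : IsUnit (Ideal.Quotient.mk (maximalIdeal 𝒪) ((derivative f).eval 1)) := by
    obtain ⟨g, hfg, hgnd⟩ :=
      (f.map (residue 𝒪)).exists_eq_pow_rootMultiplicity_mul_and_not_dvd hmapne 1
    rw [hres, pow_one] at hfg
    have hg1 : g.eval 1 ≠ 0 := fun h => hgnd (dvd_iff_isRoot.mpr h)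
    have hder : (derivative (f.map (residue 𝒪))).eval 1 = g.eval 1 := by
      rw [hfg, derivative_mul]
      simp
    have : Ideal.Quotient.mk (maximalIdeal 𝒪) ((derivative f).eval 1)
        = (derivative (f.map (residue 𝒪))).eval 1 := by
      rw [Polynomial.derivative_map, Polynomial.eval_map,
        show (1 : ResidueField 𝒪) = residue 𝒪 1 by rw [_root_.map_one], eval₂_at_apply]
      rfl
    rw [this, hder]
    exact isUnit_iff_ne_zero.mpr hg1
  obtain ⟨a, haroot, hamem⟩ := HenselianRing.is_henselian f hmono 1 h₁ h₂
  refine ⟨a, haroot, ?_⟩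
  have := Ideal.Quotient.eq.mpr hamem
  rw [show Ideal.Quotient.mk (maximalIdeal 𝒪) (1 : 𝒪) = 1 by rw [_root_.map_one]] at this
  exact this

/-- Let `G` be a profinite group, `E/ℚ_p` finite with ring of integers `𝒪`
(modelled as a compact topological local domain, finite and free over `ℤ_p`) and residue
field `k = 𝒪/𝔪`. If `ρ : G → GL_n(𝒪)` is a continuous representation whose residual
representation has a group element `g₀` with eigenvalue `1` of algebraic multiplicity one
(multiplicity of the root `1` of the characteristic polynomial), then some `ρ(g)` has
eigenvalue `1` with algebraic multiplicity one. -/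
theorem stmt_2 (p : ℕ) [Fact p.Prime]
    (G : Type*) [Group G] [TopologicalSpace G] [IsTopologicalGroup G]
    [CompactSpace G] [T2Space G] [TotallyDisconnectedSpace G]
    (𝒪 : Type*) [CommRing 𝒪] [IsDomain 𝒪] [IsLocalRing 𝒪]
    [TopologicalSpace 𝒪] [IsTopologicalRing 𝒪] [CompactSpace 𝒪]
    [Algebra ℤ_[p] 𝒪] [Module.Finite ℤ_[p] 𝒪] [Module.Free ℤ_[p] 𝒪]
    (n : ℕ)
    (ρ : G →* GL (Fin n) 𝒪)
    (hρ : Continuous fun g : G => ((ρ g : GL (Fin n) 𝒪) : Matrix (Fin n) (Fin n) 𝒪))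
    (g₀ : G)
    (hg₀ : Polynomial.rootMultiplicity 1
        (Matrix.charpoly (((ρ g₀ : GL (Fin n) 𝒪) : Matrix (Fin n) (Fin n) 𝒪).map
          (IsLocalRing.residue 𝒪))) = 1) :
    ∃ g : G, Polynomial.rootMultiplicity 1
        (Matrix.charpoly ((ρ g : GL (Fin n) 𝒪) : Matrix (Fin n) (Fin n) 𝒪)) = 1 := by
  classical
  have hp : p.Prime := Fact.out
  -- the case n = 0 is vacuous
  rcases Nat.eq_zero_or_pos n with hn0 | hn0
  · exfalso
    subst hn0
    have hch : Matrix.charpoly (((ρ g₀ : GL (Fin 0) 𝒪) : Matrix (Fin 0) (Fin 0) 𝒪).map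
        (IsLocalRing.residue 𝒪)) = 1 := by
      rw [Matrix.charpoly, Matrix.det_isEmpty]
    rw [hch] at hg₀
    have : rootMultiplicity (1 : ResidueField 𝒪) 1 = 0 :=
      rootMultiplicity_eq_zero (by simp [IsRoot])
    omega
  haveI : Nonempty (Fin n) := ⟨⟨0, hn0⟩⟩
  -- basic ring-theoretic facts
  set k := ResidueField 𝒪 with hk
  have hpm : (p : 𝒪) ∈ maximalIdeal 𝒪 := p_mem_max p 𝒪
  haveI hfink : Finite k := finite_quot p 𝒪 (maximalIdeal 𝒪) hpm
  haveI : CharP k p := by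
    have hp0 : (p : k) = 0 := by
      rw [show ((p : k)) = residue 𝒪 ((p : 𝒪)) by rw [map_natCast]]
      exact Ideal.Quotient.eq_zero_iff_mem.mpr hpm
    exact (CharP.charP_iff_prime_eq_zero hp).mpr hp0
  haveI : IsNoetherianRing 𝒪 := noetherian_O p 𝒪
  haveI : IsAdicComplete (maximalIdeal 𝒪) 𝒪 := adic_complete p 𝒪
  haveI : HenselianRing 𝒪 (maximalIdeal 𝒪) := inferInstance
  haveI : Finite (Matrix (Fin n) (Fin n) k) := Finite.of_equiv _ Matrix.of
  haveI : Finite (GL (Fin n) k) := inferInstance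
  -- group-theoretic construction of v
  set N := Nat.card (GL (Fin n) k) with hN
  have hN0 : N ≠ 0 := Nat.card_pos.ne'
  set a := N.factorization p with ha
  set b := N / p ^ a with hb
  have hab : p ^ a * b = N := Nat.ordProj_mul_ordCompl_eq_self N p
  have hpb : p.Coprime b := Nat.coprime_ordCompl hp hN0
  have hb0 : b ≠ 0 := by
    intro h; rw [h, mul_zero] at hab; exact hN0 hab.symm
  set S : Set G := closure (Set.range fun m : ℤ => g₀ ^ m) with hS
  have hg₀S : g₀ ∈ S := subset_closure ⟨1, zpow_one g₀⟩
  have hScomm : ∀ x ∈ S, g₀ * x = x * g₀ := by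
    have hclosed : IsClosed {x : G | g₀ * x = x * g₀} :=
      isClosed_eq (continuous_const.mul continuous_id) (continuous_id.mul continuous_const)
    intro x hx
    refine closure_minimal ?_ hclosed hx
    rintro y ⟨m, rfl⟩
    exact ((Commute.refl g₀).zpow_right m).eq
  set P : ℕ → Set G := fun j => Set.range (fun x : G => x ^ (p ^ j)) with hP
  set Q : Set G := Set.range (fun w : G => g₀ * (w ^ b)⁻¹) with hQ
  set F : ℕ → Set G := fun j => S ∩ P j ∩ Q with hF
  have hFclosed : ∀ j, IsClosed (F j) := by
    intro j
    refine IsClosed.inter (IsClosed.inter isClosed_closure ?_) ?_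
    · exact (isCompact_range (continuous_pow (p ^ j))).isClosed
    · exact (isCompact_range (continuous_const.mul
        ((continuous_pow b).inv))).isClosed
  have hFanti : ∀ j, F (j + 1) ⊆ F j := by
    intro j x hx
    obtain ⟨⟨hxS, hxP⟩, hxQ⟩ := hx
    refine ⟨⟨hxS, ?_⟩, hxQ⟩
    obtain ⟨w, hw⟩ := hxP
    have hw' : w ^ p ^ (j + 1) = x := hw
    refine ⟨w ^ p, ?_⟩
    show (w ^ p) ^ p ^ j = x
    rw [← pow_mul, ← pow_succ', hw']
  have hFne : ∀ j, (F j).Nonempty := by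
    intro j
    have hcop : (p ^ j).Coprime b := Nat.Coprime.pow_left j hpb
    obtain ⟨s₀, hs₀1, hs₀2⟩ := Nat.chineseRemainder hcop 0 1
    set s := s₀ + p ^ j * b with hs
    have hs1 : s ≡ 0 [MOD p ^ j] := by
      show s % (p ^ j) = 0 % (p ^ j)
      rw [hs, Nat.add_mul_mod_self_left]
      exact hs₀1
    have hs2 : s ≡ 1 [MOD b] := by
      show s % b = 1 % b
      rw [hs, Nat.add_mul_mod_self_right]
      exact hs₀2
    obtain ⟨t, ht⟩ := Nat.modEq_zero_iff_dvd.mp hs1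
    refine ⟨g₀ ^ s, ⟨⟨?_, ?_⟩, ?_⟩⟩
    · exact subset_closure ⟨(s : ℤ), zpow_natCast g₀ s⟩
    · refine ⟨g₀ ^ t, ?_⟩
      show (g₀ ^ t) ^ p ^ j = g₀ ^ s
      rw [← pow_mul, mul_comm, ← ht]
    · have hdvd : ((b : ℤ)) ∣ (1 : ℤ) - (s : ℤ) := Nat.ModEq.dvd hs2
      obtain ⟨z, hz⟩ := hdvd
      refine ⟨g₀ ^ z, ?_⟩
      show g₀ * ((g₀ ^ z) ^ b)⁻¹ = g₀ ^ s
      have h1 : (g₀ ^ z) ^ b = g₀ ^ ((1 : ℤ) - (s : ℤ)) := by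
        rw [← zpow_natCast (g₀ ^ z) b, ← _root_.zpow_mul, mul_comm z (b : ℤ), ← hz]
      rw [h1, ← zpow_natCast g₀ s]
      group
  obtain ⟨v, hv⟩ := IsCompact.nonempty_iInter_of_sequence_nonempty_isCompact_isClosed
    F hFanti hFne ((hFclosed 0).isCompact) hFclosed
  have hvF : ∀ j, v ∈ F j := Set.mem_iInter.mp hv
  have hvS : v ∈ S := (hvF 0).1.1
  have hvP : ∀ j, ∃ w : G, w ^ p ^ j = v := fun j => (hvF j).1.2
  obtain ⟨w₀, hw₀⟩ : ∃ w : G, g₀ * (w ^ b)⁻¹ = v := (hvF 0).2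
  -- group identities
  have hgv : g₀ * v = v * g₀ := hScomm v hvS
  have hg₀eq : g₀ = v * w₀ ^ b := by rw [← hw₀]; group
  have hcommG : v * w₀ ^ b = w₀ ^ b * v := by
    have h1 : w₀ ^ b = v⁻¹ * g₀ := by rw [hg₀eq]; group
    rw [h1]
    calc v * (v⁻¹ * g₀) = g₀ := by group
      _ = v⁻¹ * (v * g₀) := by group
      _ = v⁻¹ * (g₀ * v) := by rw [← hgv]
      _ = v⁻¹ * g₀ * v := by group
  -- matrices
  set res : 𝒪 →+* k := residue 𝒪 with hres
  set RM : Matrix (Fin n) (Fin n) 𝒪 →+* Matrix (Fin n) (Fin n) k := res.mapMatrix with hRM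
  set V : Matrix (Fin n) (Fin n) 𝒪 := ((ρ v : GL (Fin n) 𝒪) : Matrix (Fin n) (Fin n) 𝒪) with hV
  set A : Matrix (Fin n) (Fin n) 𝒪 := ((ρ g₀ : GL (Fin n) 𝒪) : Matrix (Fin n) (Fin n) 𝒪) with hA
  set U : Matrix (Fin n) (Fin n) 𝒪 := ((ρ w₀ : GL (Fin n) 𝒪) : Matrix (Fin n) (Fin n) 𝒪) ^ b
    with hU
  have hAVU : A = V * U := by
    rw [hA, hg₀eq, _root_.map_mul, _root_.map_pow, Units.val_mul, Units.val_pow_eq_pow_val]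
  have hUV : V * U = U * V := by
    have := congrArg (fun x : G => ((ρ x : GL (Fin n) 𝒪) : Matrix (Fin n) (Fin n) 𝒪)) hcommG
    simpa [_root_.map_mul, _root_.map_pow, Units.val_mul, Units.val_pow_eq_pow_val] using this
  -- unipotence of U mod m
  have hUnip : (RM U) ^ p ^ a = 1 := by
    set u : GL (Fin n) k := Units.map RM.toMonoidHom (ρ w₀) with hu
    have hcard : u ^ (b * p ^ a) = 1 := by
      rw [show b * p ^ a = N by rw [mul_comm]; exact hab]
      exact pow_card_eq_one'
    have hval := congrArg (Units.val) hcard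
    rw [Units.val_pow_eq_pow_val, Units.val_one] at hval
    rw [hRM, hU, _root_.map_pow, ← pow_mul]
    calc ((res.mapMatrix) ((ρ w₀ : GL (Fin n) 𝒪) : Matrix (Fin n) (Fin n) 𝒪)) ^ (b * p ^ a)
        = (↑u : Matrix (Fin n) (Fin n) k) ^ (b * p ^ a) := by rw [hu, Units.coe_map]; rfl
      _ = 1 := hval
  have hAbar : (RM A) ^ p ^ a = (RM V) ^ p ^ a := by
    have hcomm : Commute (RM V) (RM U) := by
      show RM V * RM U = RM U * RM V
      rw [← _root_.map_mul, ← _root_.map_mul, hUV]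
    rw [hAVU, _root_.map_mul, hcomm.mul_pow, hUnip, mul_one]
  -- residual multiplicity for V
  have h1 : rootMultiplicity 1 (charpoly (RM V)) = 1 := by
    have e1 := rootMult_charpoly_pow (p := p) (RM A) a
    have e2 := rootMult_charpoly_pow (p := p) (RM V) a
    rw [hAbar, e2] at e1
    rw [e1, show RM A = A.map ⇑res from rfl]
    exact hg₀
  have hresV : rootMultiplicity 1 ((charpoly V).map res) = 1 := by
    rw [← Matrix.charpoly_map]
    exact h1
  -- Hensel root for V
  obtain ⟨α, hαroot, hα1⟩ := hensel_root_one V hresV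
  -- roots from k-th roots of v
  have hαpow : ∀ j, ∃ β : 𝒪, β ^ p ^ j = α := by
    intro j
    obtain ⟨w, hw⟩ := hvP j
    set W : Matrix (Fin n) (Fin n) 𝒪 := ((ρ w : GL (Fin n) 𝒪) : Matrix (Fin n) (Fin n) 𝒪)
      with hW
    have hWV : W ^ p ^ j = V := by
      rw [hW, hV, ← hw, map_pow, Units.val_pow_eq_pow_val]
    have hresW : rootMultiplicity 1 ((charpoly W).map res) = 1 := by
      have e3 := rootMult_charpoly_pow (p := p) (RM W) j
      have : (RM W) ^ p ^ j = RM V := by rw [← _root_.map_pow, hWV]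
      rw [this, h1] at e3
      rw [← Matrix.charpoly_map]
      exact e3.symm
    obtain ⟨β, hβroot, hβ1⟩ := hensel_root_one W hresW
    refine ⟨β, ?_⟩
    have hβpow : (charpoly (W ^ p ^ j)).IsRoot (β ^ p ^ j) := isRoot_charpoly_pow W hβroot _
    rw [hWV] at hβpow
    have hβres : res (β ^ p ^ j) = 1 := by rw [_root_.map_pow, hβ1, one_pow]
    exact root_unique (charpoly_monic V) hresV hβpow hαroot hβres hα1
  -- α = 1 by completeness
  have hαmem : ∀ j : ℕ, α - 1 ∈ maximalIdeal 𝒪 ^ j := by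
    intro j
    rcases Nat.eq_zero_or_pos j with h0 | hj
    · subst h0; simp
    obtain ⟨β, hβ⟩ := hαpow (j - 1)
    have hres1 : res β = 1 := by
      have hβroot : (res β) ^ p ^ (j - 1) = 1 := by
        rw [← _root_.map_pow, hβ]; exact hα1
      have h2 : (res β - 1) ^ p ^ (j - 1) = 0 := by
        rw [sub_pow_char_pow_of_commute p (j - 1) (Commute.all _ _), hβroot, one_pow, sub_self]
      exact sub_eq_zero.mp (pow_eq_zero_iff (pow_ne_zero _ hp.ne_zero) |>.mp h2)
    have hβm : β - 1 ∈ maximalIdeal 𝒪 := by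
      have : res (β - 1) = 0 := by rw [map_sub, hres1, _root_.map_one, sub_self]
      exact Ideal.Quotient.eq_zero_iff_mem.mp this
    have hmem := pow_p_sub_one_mem hpm hβm (j - 1)
    rw [hβ] at hmem
    rwa [show j - 1 + 1 = j by omega] at hmem
  have hα : α = 1 := by
    have hbot : (⨅ i : ℕ, (maximalIdeal 𝒪) ^ i) = ⊥ :=
      Ideal.iInf_pow_eq_bot_of_isLocalRing _ (IsLocalRing.maximalIdeal.isMaximal 𝒪).ne_top
    have hmem : α - 1 ∈ (⨅ i : ℕ, (maximalIdeal 𝒪) ^ i) := Submodule.mem_iInf _ |>.mpr hαmem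
    rw [hbot, Ideal.mem_bot, sub_eq_zero] at hmem
    exact hmem
  -- conclusion
  refine ⟨v, le_antisymm ?_ ?_⟩
  · have hmapne : (charpoly V).map res ≠ 0 := ((charpoly_monic V).map _).ne_zero
    have := Polynomial.le_rootMultiplicity_map hmapne (1 : 𝒪)
    rw [_root_.map_one, hresV] at this
    exact this
  · rw [hα] at hαroot
    exact (rootMultiplicity_pos (charpoly_monic V).ne_zero).mpr hαroot
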